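/- If a finite simplicial graph Γ admits no nontrivial graph automorphism, then the directed graph Λ(Γ) on the vertices of Γ, with a directed edge from v to w whenever w dominates v and w ≠ v, contains no directed cycles. -/

import Mathlib

/-- `w` dominates `v` in `Γ`: lk(v) ⊆ st(w). -/
def Dominates {V : Type*} (Γ : SimpleGraph V) (w v : V) : Prop :=
  Γ.neighborSet v ⊆ Γ.neighborSet w ∪ {w}

lemma dominates_adj {V : Type*} {Γ : SimpleGraph V} {w v x : V}
    (h : Dominates Γ w v) (hx : Γ.Adj v x) : Γ.Adj w x ∨ x = w := by
  have := h (by simpa [SimpleGraph.mem_neighborSet] using hx)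
  rcases this with h1 | h1
  · exact Or.inl (by simpa [SimpleGraph.mem_neighborSet] using h1)
  · exact Or.inr (by simpa using h1)

lemma dominates_trans {V : Type*} {Γ : SimpleGraph V} {x w v : V}
    (hxw : Dominates Γ x w) (hwv : Dominates Γ w v) : Dominates Γ x v := by
  intro u hu
  rw [SimpleGraph.mem_neighborSet] at hu
  rcases dominates_adj hwv hu with hw | rfl
  · rcases dominates_adj hxw hw with hx | rfl
    · exact Or.inl (by simpa [SimpleGraph.mem_neighborSet] using hx)
    · exact Or.inr rfl
  · -- u = w, so Γ.Adj v w
    rcases dominates_adj hxw hu.symm with hv | rfl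
    · rcases dominates_adj hwv hv.symm with hx | rfl
      · exact Or.inl (by simpa [SimpleGraph.mem_neighborSet] using hx.symm)
      · exact Or.inr rfl
    · exact Or.inl (by simpa [SimpleGraph.mem_neighborSet] using hu)

lemma swap_adj {V : Type*} [DecidableEq V] {Γ : SimpleGraph V} {z u : V}
    (hzu : Dominates Γ z u) (huz : Dominates Γ u z) :
    ∀ a b, Γ.Adj a b → Γ.Adj (Equiv.swap z u a) (Equiv.swap z u b) := by
  intro a b hab
  rcases eq_or_ne a z with rfl | haz
  · rcases eq_or_ne b u with rfl | hbu
    · simpa [Equiv.swap_apply_left, Equiv.swap_apply_right] using hab.symm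
    · have hbz : b ≠ a := fun hb => Γ.loopless.irrefl a (hb ▸ hab)
      rcases dominates_adj huz hab with h | h
      · simpa [Equiv.swap_apply_left, Equiv.swap_apply_of_ne_of_ne hbz hbu] using h
      · exact absurd h hbu
  · rcases eq_or_ne a u with rfl | hau
    · rcases eq_or_ne b z with rfl | hbz
      · simpa [Equiv.swap_apply_left, Equiv.swap_apply_right] using hab.symm
      · have hbu : b ≠ a := fun hb => Γ.loopless.irrefl a (hb ▸ hab)
        rcases dominates_adj hzu hab with h | h
        · simpa [Equiv.swap_apply_right, Equiv.swap_apply_of_ne_of_ne hbz hbu] using h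
        · exact absurd h hbz
    · rw [Equiv.swap_apply_of_ne_of_ne haz hau]
      rcases eq_or_ne b z with rfl | hbz
      · rcases dominates_adj huz hab.symm with h | h
        · simpa [Equiv.swap_apply_left] using h.symm
        · exact absurd h hau
      · rcases eq_or_ne b u with rfl | hbu
        · rcases dominates_adj hzu hab.symm with h | h
          · simpa [Equiv.swap_apply_right] using h.symm
          · exact absurd h haz
        · rwa [Equiv.swap_apply_of_ne_of_ne hbz hbu]

/-- if Γ has no nontrivial automorphism, then the domination digraph
Λ(Γ) (edge v → w when w ≠ v and w dominates v) has no directed cycles. -/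
theorem no_automorphism_implies_acyclic {V : Type*} [Fintype V] (Γ : SimpleGraph V)
    (h : ∀ e : Γ ≃g Γ, e.toEquiv = Equiv.refl V) :
    ∀ u : V, ¬ Relation.TransGen (fun x y : V => y ≠ x ∧ Dominates Γ y x) u u := by
  classical
  intro u hcyc
  set R := fun x y : V => y ≠ x ∧ Dominates Γ y x with hR
  have key : ∀ a b : V, Relation.TransGen R a b → Dominates Γ b a := by
    intro a b hab
    induction hab with
    | single hstep => exact hstep.2
    | tail _ hstep ih => exact dominates_trans hstep.2 ih
  cases hcyc with
  | single hstep => exact hstep.1 rfl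
  | @tail b _ hub hstep =>
    have hbu : Dominates Γ b u := key u b hub
    have hub' : Dominates Γ u b := hstep.2
    have hne : u ≠ b := hstep.1
    let e : Γ ≃g Γ := ⟨Equiv.swap b u, by
      intro a c
      constructor
      · intro hac
        have := swap_adj hbu hub' _ _ hac
        simpa using this
      · intro hac
        exact swap_adj hbu hub' a c hac⟩
    have he := h e
    have hb : Equiv.swap b u b = b := by
      change e.toEquiv b = b
      rw [he]; rfl
    rw [Equiv.swap_apply_left] at hb
    exact hne hb
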